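/- Let z₁, z₂ > 0 with z₁² + z₂² < 1, let r > 1 be the side-length ratio and θ ∈ (π/2, π) the larger interior angle of the parallelogram with vertices ±(1,0) and ±(z₁, z₂). Then z₁ = (r² − 1)/(1 + r² − 2r cos θ) and z₂ = 2r sin θ/(1 + r² − 2r cos θ). -/

import Mathlib

open Real

theorem stmt_7 (z₁ z₂ : ℝ) (hz₁ : 0 < z₁) (hz₂ : 0 < z₂) (hsum : z₁ ^ 2 + z₂ ^ 2 < 1)
    (a v : EuclideanSpace ℝ (Fin 2)) (ha : a = !₂[1, 0]) (hv : v = !₂[z₁, z₂])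
    (r θ : ℝ)
    (hr : r = ‖v + a‖ / ‖v - a‖)
    (hθ : θ = InnerProductGeometry.angle (a - v) (-a - v)) :
    z₁ = (r ^ 2 - 1) / (1 + r ^ 2 - 2 * r * cos θ) ∧
    z₂ = 2 * r * sin θ / (1 + r ^ 2 - 2 * r * cos θ) := by
  set s2 : ℝ := (1-z₁)^2 + z₂^2 with hs2def
  set t2 : ℝ := (1+z₁)^2 + z₂^2 with ht2def
  have hs2 : 0 < s2 := by positivity
  have ht2 : 0 < t2 := by positivity
  have hna : ‖a - v‖ = Real.sqrt s2 := by
    rw [EuclideanSpace.norm_eq]; simp [ha, hv, Fin.sum_univ_two, hs2def]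
  have hnb : ‖-a - v‖ = Real.sqrt t2 := by
    rw [EuclideanSpace.norm_eq]; simp [ha, hv, Fin.sum_univ_two, ht2def]
    ring_nf
  have hin : inner ℝ (a - v) (-a - v) = (z₁^2+z₂^2-1 : ℝ) := by
    rw [PiLp.inner_apply]; simp [ha, hv, Fin.sum_univ_two]; ring
  have hva : ‖v - a‖ = Real.sqrt s2 := by rw [← hna, ← norm_neg]; congr 1; abel
  have hvb : ‖v + a‖ = Real.sqrt t2 := by rw [← hnb, ← norm_neg]; congr 1; abel
  have hss : Real.sqrt s2 > 0 := Real.sqrt_pos.mpr hs2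
  have hts : Real.sqrt t2 > 0 := Real.sqrt_pos.mpr ht2
  have hrr : r = Real.sqrt t2 / Real.sqrt s2 := by rw [hr, hva, hvb]
  have hcos : cos θ = (z₁^2+z₂^2-1) / (Real.sqrt s2 * Real.sqrt t2) := by
    rw [hθ, InnerProductGeometry.cos_angle, hin, hna, hnb]
  have hsin : sin θ = 2 * z₂ / (Real.sqrt s2 * Real.sqrt t2) := by
    rw [hθ, InnerProductGeometry.angle, hin, hna, hnb, Real.sin_arccos]
    rw [show Real.sqrt s2 * Real.sqrt t2 = Real.sqrt (s2 * t2) by rw [Real.sqrt_mul hs2.le]]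
    have hst : s2 * t2 > 0 := by positivity
    have h1 : (1:ℝ) - ((z₁^2+z₂^2-1) / Real.sqrt (s2*t2))^2 = (2*z₂)^2 / (s2*t2) := by
      rw [div_pow, Real.sq_sqrt hst.le]
      field_simp
      ring
    rw [h1, Real.sqrt_div ((by positivity : (0:ℝ) ≤ (2*z₂)^2)) , Real.sqrt_sq (by positivity : (0:ℝ) ≤ 2*z₂)]
  have hrsq : r^2 = t2/s2 := by
    rw [hrr, div_pow, Real.sq_sqrt hs2.le, Real.sq_sqrt ht2.le]
  have hmm : Real.sqrt s2 * Real.sqrt s2 = s2 := Real.mul_self_sqrt hs2.le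
  have key : ∀ c : ℝ, Real.sqrt t2 / Real.sqrt s2 * (c / (Real.sqrt s2 * Real.sqrt t2)) = c / s2 := by
    intro c
    field_simp
    linear_combination (-c) * hmm
  have hrc : r * cos θ = (z₁^2+z₂^2-1) / s2 := by
    rw [hrr, hcos]; exact key _
  have hrs : r * sin θ = 2*z₂ / s2 := by
    rw [hrr, hsin]; exact key _
  have hD : 1 + r^2 - 2*r*cos θ = 4 / s2 := by
    rw [hrsq, mul_assoc, hrc]
    field_simp
    ring
  constructor
  · rw [hD, hrsq]
    field_simp
    ring
  · rw [hD, mul_assoc, hrs]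
    field_simp
    ring
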